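/- For all integers i, j ≥ 0: Σ_{ℓ=0}^{j} 1/C(i+j+1, ℓ) ≤ 11/5, where C(m, ℓ) denotes the binomial coefficient m choose ℓ. -/
import Mathlib

lemma aux_choose_ge (n ℓ : ℕ) (h1 : 1 ≤ ℓ) (h2 : ℓ + 1 ≤ n) : n ≤ Nat.choose n ℓ := by
  induction n with
  | zero => omega
  | succ n ih =>
    rcases Nat.eq_or_lt_of_le h1 with h | h
    · simp [← h]
    · rcases Nat.eq_or_lt_of_le h2 with h' | h'
      · have : ℓ = n := by omega
        subst this
        simp [Nat.choose_succ_self_right]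
      · have hn : n ≤ Nat.choose n ℓ := ih (by omega)
        have hpos : 0 < Nat.choose n (ℓ - 1) := Nat.choose_pos (by omega)
        have : Nat.choose (n + 1) ℓ = Nat.choose n (ℓ - 1) + Nat.choose n ℓ := by
          have : ℓ = (ℓ - 1) + 1 := by omega
          rw [this, Nat.choose_succ_succ]
          simp
        omega

/-- `Σ_{ℓ=0}^{j} 1/C(i+j+1, ℓ) ≤ 11/5`. -/
theorem stmt_16 (i j : ℕ) :
    ∑ ℓ ∈ Finset.range (j + 1), ((Nat.choose (i + j + 1) ℓ : ℝ))⁻¹ ≤ 11/5 := by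
  have key : ∀ ℓ ∈ Finset.range j, ((Nat.choose (i + j + 1) (ℓ + 1) : ℝ))⁻¹ ≤ ((j : ℝ) + 1)⁻¹ := by
    intro ℓ hℓ
    rw [Finset.mem_range] at hℓ
    have h : (j + 1 : ℕ) ≤ Nat.choose (i + j + 1) (ℓ + 1) := by
      calc (j + 1 : ℕ) ≤ Nat.choose (j + 1) (ℓ + 1) := aux_choose_ge _ _ (by omega) (by omega)
        _ ≤ Nat.choose (i + j + 1) (ℓ + 1) := Nat.choose_le_choose _ (by omega)
    apply inv_anti₀ (by positivity)
    exact_mod_cast h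
  rw [Finset.sum_range_succ']
  simp only [Nat.choose_zero_right, Nat.cast_one, inv_one]
  have h1 : ∑ ℓ ∈ Finset.range j, ((Nat.choose (i + j + 1) (ℓ + 1) : ℝ))⁻¹
      ≤ (j : ℝ) * ((j : ℝ) + 1)⁻¹ := by
    calc _ ≤ ∑ _ℓ ∈ Finset.range j, ((j : ℝ) + 1)⁻¹ := Finset.sum_le_sum key
      _ = (j : ℝ) * ((j : ℝ) + 1)⁻¹ := by simp [mul_comm]
  have h2 : (j : ℝ) * ((j : ℝ) + 1)⁻¹ ≤ 1 := by
    rw [mul_inv_le_iff₀ (by positivity)]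
    linarith
  linarith
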